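/- arXiv:1609.01934 — 2 statements merged into one kernel-verified Lean document; each statement's English description precedes it below -/
import Mathlib

section
/- Let A : U × V → F be a bilinear form on finite-dimensional F-vector spaces. If (X, Y) and (X', Y') are both maximum stable pairs (stable pairs maximizing dim X + dim Y), then (X ∩ X', Y + Y') and (X + X', Y ∩ Y') are also maximum stable pairs. -/
/-- A pair of subspaces `(X, Y)` is stable for the bilinear form `A` if `A`
vanishes on `X × Y`. -/
def IsStable {F U V : Type*} [Field F]
    [AddCommGroup U] [Module F U] [AddCommGroup V] [Module F V]
    (A : U →ₗ[F] V →ₗ[F] F) (X : Submodule F U) (Y : Submodule F V) : Prop :=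
  ∀ x ∈ X, ∀ y ∈ Y, A x y = 0

/-- A stable pair is maximum if it maximizes `dim X + dim Y`. -/
def IsMaxStable {F U V : Type*} [Field F]
    [AddCommGroup U] [Module F U] [AddCommGroup V] [Module F V]
    (A : U →ₗ[F] V →ₗ[F] F) (X : Submodule F U) (Y : Submodule F V) : Prop :=
  IsStable A X Y ∧
    ∀ (X' : Submodule F U) (Y' : Submodule F V), IsStable A X' Y' →
      Module.finrank F X' + Module.finrank F Y' ≤
        Module.finrank F X + Module.finrank F Y

theorem maxStable_inf_sup
    (F U V : Type*) [Field F]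
    [AddCommGroup U] [Module F U] [FiniteDimensional F U]
    [AddCommGroup V] [Module F V] [FiniteDimensional F V]
    (A : U →ₗ[F] V →ₗ[F] F)
    (X X' : Submodule F U) (Y Y' : Submodule F V)
    (h : IsMaxStable A X Y) (h' : IsMaxStable A X' Y') :
    IsMaxStable A (X ⊓ X') (Y ⊔ Y') ∧ IsMaxStable A (X ⊔ X') (Y ⊓ Y') := by
  have stab1 : IsStable A (X ⊓ X') (Y ⊔ Y') := by
    intro x hx y hy
    obtain ⟨y1, h1, y2, h2, rfl⟩ := Submodule.mem_sup.mp hy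
    rw [map_add, h.1 x hx.1 y1 h1, h'.1 x hx.2 y2 h2, add_zero]
  have stab2 : IsStable A (X ⊔ X') (Y ⊓ Y') := by
    intro x hx y hy
    obtain ⟨x1, h1, x2, h2, rfl⟩ := Submodule.mem_sup.mp hx
    rw [map_add, LinearMap.add_apply, h.1 x1 h1 y hy.1, h'.1 x2 h2 y hy.2, add_zero]
  have hMM' : Module.finrank F X' + Module.finrank F Y' =
      Module.finrank F X + Module.finrank F Y :=
    le_antisymm (h.2 X' Y' h'.1) (h'.2 X Y h.1)
  have hsum : (Module.finrank F ↥(X ⊓ X') + Module.finrank F ↥(Y ⊔ Y')) +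
      (Module.finrank F ↥(X ⊔ X') + Module.finrank F ↥(Y ⊓ Y')) =
      (Module.finrank F X + Module.finrank F Y) +
      (Module.finrank F X + Module.finrank F Y) := by
    have h1 := Submodule.finrank_sup_add_finrank_inf_eq X X'
    have h2 := Submodule.finrank_sup_add_finrank_inf_eq Y Y'
    omega
  have le1 := h.2 _ _ stab1
  have le2 := h.2 _ _ stab2
  have eq1 : Module.finrank F ↥(X ⊓ X') + Module.finrank F ↥(Y ⊔ Y') =
      Module.finrank F X + Module.finrank F Y := by omega
  have eq2 : Module.finrank F ↥(X ⊔ X') + Module.finrank F ↥(Y ⊓ Y') =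
      Module.finrank F X + Module.finrank F Y := by omega
  exact ⟨⟨stab1, fun X'' Y'' hs => eq1 ▸ h.2 X'' Y'' hs⟩,
    ⟨stab2, fun X'' Y'' hs => eq2 ▸ h.2 X'' Y'' hs⟩⟩
end

section
/- Let A : U × V → F be a bilinear form with U, V finite-dimensional. The family of maximum stable pairs of subspaces, partially ordered by (X,Y) ⪯ (X',Y') iff X ⊆ X', forms a lattice with meet (X ∩ X', Y + Y') and join (X + X', Y ∩ Y'). -/
/-- The family of maximum stable pairs, ordered by `(X,Y) ⪯ (X',Y') ↔ X ⊆ X'`,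
is a lattice: `(X ⊓ X', Y ⊔ Y')` is the meet (greatest lower bound) and
`(X ⊔ X', Y ⊓ Y')` is the join (least upper bound). -/
theorem maxStable_lattice
    (F U V : Type*) [Field F]
    [AddCommGroup U] [Module F U] [FiniteDimensional F U]
    [AddCommGroup V] [Module F V] [FiniteDimensional F V]
    (A : U →ₗ[F] V →ₗ[F] F)
    (X X' : Submodule F U) (Y Y' : Submodule F V)
    (h : IsMaxStable A X Y) (h' : IsMaxStable A X' Y') :
    IsMaxStable A (X ⊓ X') (Y ⊔ Y') ∧ IsMaxStable A (X ⊔ X') (Y ⊓ Y') ∧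
    (X ⊓ X' ≤ X ∧ X ⊓ X' ≤ X' ∧
      ∀ (X'' : Submodule F U) (Y'' : Submodule F V), IsMaxStable A X'' Y'' →
        X'' ≤ X → X'' ≤ X' → X'' ≤ X ⊓ X') ∧
    (X ≤ X ⊔ X' ∧ X' ≤ X ⊔ X' ∧
      ∀ (X'' : Submodule F U) (Y'' : Submodule F V), IsMaxStable A X'' Y'' →
        X ≤ X'' → X' ≤ X'' → X ⊔ X' ≤ X'') := by

  classical
  -- stability of the meet pair
  have hmeet : IsStable A (X ⊓ X') (Y ⊔ Y') := by
    intro x hx y hy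
    obtain ⟨y1, hy1, y2, hy2, rfl⟩ := Submodule.mem_sup.mp hy
    rw [map_add, h.1 x hx.1 y1 hy1, h'.1 x hx.2 y2 hy2, add_zero]
  -- stability of the join pair
  have hjoin : IsStable A (X ⊔ X') (Y ⊓ Y') := by
    intro x hx y hy
    obtain ⟨x1, hx1, x2, hx2, rfl⟩ := Submodule.mem_sup.mp hx
    rw [map_add, LinearMap.add_apply, h.1 x1 hx1 y hy.1, h'.1 x2 hx2 y hy.2, add_zero]
  have hNN : Module.finrank F X' + Module.finrank F Y' =
      Module.finrank F X + Module.finrank F Y :=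
    le_antisymm (h.2 X' Y' h'.1) (h'.2 X Y h.1)
  have hXs : Module.finrank F ↥(X ⊔ X') + Module.finrank F ↥(X ⊓ X') =
      Module.finrank F X + Module.finrank F X' :=
    Submodule.finrank_sup_add_finrank_inf_eq X X'
  have hYs : Module.finrank F ↥(Y ⊔ Y') + Module.finrank F ↥(Y ⊓ Y') =
      Module.finrank F Y + Module.finrank F Y' :=
    Submodule.finrank_sup_add_finrank_inf_eq Y Y'
  have ha : Module.finrank F ↥(X ⊓ X') + Module.finrank F ↥(Y ⊔ Y') ≤
      Module.finrank F X + Module.finrank F Y := h.2 _ _ hmeet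
  have hb : Module.finrank F ↥(X ⊔ X') + Module.finrank F ↥(Y ⊓ Y') ≤
      Module.finrank F X + Module.finrank F Y := h.2 _ _ hjoin
  have ha' : Module.finrank F ↥(X ⊓ X') + Module.finrank F ↥(Y ⊔ Y') =
      Module.finrank F X + Module.finrank F Y := by omega
  have hb' : Module.finrank F ↥(X ⊔ X') + Module.finrank F ↥(Y ⊓ Y') =
      Module.finrank F X + Module.finrank F Y := by omega
  refine ⟨⟨hmeet, ?_⟩, ⟨hjoin, ?_⟩, ⟨inf_le_left, inf_le_right,
    fun X'' Y'' _ h1 h2 => le_inf h1 h2⟩,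
    ⟨le_sup_left, le_sup_right, fun X'' Y'' _ h1 h2 => sup_le h1 h2⟩⟩
  · intro X2 Y2 hs
    rw [ha']
    exact h.2 X2 Y2 hs
  · intro X2 Y2 hs
    rw [hb']
    exact h.2 X2 Y2 hs
end
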